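/- For real numbers 0 < r₁, 0 < r₂, 0 < Δθ < π, and t ∈ [0,1], coth((1-t) r₁ + t r₂) ≤ (coth(r₁) sin((1-t)Δθ) + coth(r₂) sin(tΔθ)) / sin(Δθ), with strict inequality when 0 < t < 1 and (r₁ ≠ r₂ or Δθ arbitrary with the sine bound strict). -/

import Mathlib

noncomputable def coth (x : ℝ) : ℝ := Real.cosh x / Real.sinh x

lemma coth_hasDerivAt {x : ℝ} (hx : 0 < x) :
    HasDerivAt coth (-(Real.sinh x ^ 2)⁻¹) x := by
  have hs : Real.sinh x ≠ 0 := ne_of_gt (Real.sinh_pos_iff.2 hx)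
  have h : HasDerivAt coth
      ((Real.sinh x * Real.sinh x - Real.cosh x * Real.cosh x) / Real.sinh x ^ 2) x :=
    (Real.hasDerivAt_cosh x).div (Real.hasDerivAt_sinh x) hs
  convert h using 1
  have := Real.cosh_sq x
  field_simp
  ring_nf
  nlinarith [Real.cosh_sq x]

lemma deriv_coth {x : ℝ} (hx : 0 < x) : deriv coth x = -(Real.sinh x ^ 2)⁻¹ :=
  (coth_hasDerivAt hx).deriv

lemma coth_convexOn : ConvexOn ℝ (Set.Ioi (0:ℝ)) coth := by
  have h := StrictMonoOn.strictConvexOn_of_deriv (convex_Ioi (0:ℝ))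
    (f := coth) ?cont ?mono
  · exact h.convexOn
  case cont =>
    intro x hx
    exact ((coth_hasDerivAt hx).differentiableAt.continuousAt).continuousWithinAt
  case mono =>
    rw [interior_Ioi]
    intro a ha b hb hab
    rw [deriv_coth ha, deriv_coth hb]
    have hsa : 0 < Real.sinh a := Real.sinh_pos_iff.2 ha
    have hsb : 0 < Real.sinh b := Real.sinh_pos_iff.2 hb
    have : Real.sinh a < Real.sinh b := Real.sinh_lt_sinh.2 hab
    have h2 : Real.sinh a ^ 2 < Real.sinh b ^ 2 := by nlinarith
    have := (inv_strictAnti₀ (by positivity) h2)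
    linarith

lemma coth_pos {x : ℝ} (hx : 0 < x) : 0 < coth x :=
  div_pos (Real.cosh_pos x) (Real.sinh_pos_iff.2 hx)

lemma sin_mul_ge {θ t : ℝ} (hθ0 : 0 < θ) (hθπ : θ ≤ Real.pi) (ht0 : 0 ≤ t) (ht1 : t ≤ 1) :
    t * Real.sin θ ≤ Real.sin (t * θ) := by
  have h := strictConcaveOn_sin_Icc.concaveOn.2 (x := 0) (y := θ)
    ⟨le_rfl, Real.pi_pos.le⟩ ⟨hθ0.le, hθπ⟩ (by linarith : (0:ℝ) ≤ 1 - t) ht0 (by ring)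
  simpa using h

lemma sin_mul_gt {θ t : ℝ} (hθ0 : 0 < θ) (hθπ : θ ≤ Real.pi) (ht0 : 0 < t) (ht1 : t < 1) :
    t * Real.sin θ < Real.sin (t * θ) := by
  have h := strictConcaveOn_sin_Icc.2 (x := 0) (y := θ)
    ⟨le_rfl, Real.pi_pos.le⟩ ⟨hθ0.le, hθπ⟩ (ne_of_lt hθ0) (by linarith : (0:ℝ) < 1 - t) ht0
    (by ring)
  simpa using h

theorem stmt_15 (r₁ r₂ Δθ t : ℝ) (hr₁ : 0 < r₁) (hr₂ : 0 < r₂)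
    (hΔθ0 : 0 < Δθ) (hΔθπ : Δθ < Real.pi) (ht0 : 0 ≤ t) (ht1 : t ≤ 1) :
    coth ((1 - t) * r₁ + t * r₂) ≤
      (coth r₁ * Real.sin ((1 - t) * Δθ) + coth r₂ * Real.sin (t * Δθ)) / Real.sin Δθ ∧
    (0 < t → t < 1 →
      coth ((1 - t) * r₁ + t * r₂) <
        (coth r₁ * Real.sin ((1 - t) * Δθ) + coth r₂ * Real.sin (t * Δθ)) /
          Real.sin Δθ) := by
  have hsin : 0 < Real.sin Δθ := Real.sin_pos_of_pos_of_lt_pi hΔθ0 hΔθπ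
  have hconv : coth ((1 - t) * r₁ + t * r₂) ≤ (1 - t) * coth r₁ + t * coth r₂ :=
    coth_convexOn.2 (Set.mem_Ioi.2 hr₁) (Set.mem_Ioi.2 hr₂)
      (by linarith) ht0 (by ring)
  have hc1 : 0 < coth r₁ := coth_pos hr₁
  have hc2 : 0 < coth r₂ := coth_pos hr₂
  have hs1 : (1 - t) * Real.sin Δθ ≤ Real.sin ((1 - t) * Δθ) :=
    sin_mul_ge hΔθ0 hΔθπ.le (by linarith) (by linarith)
  have hs2 : t * Real.sin Δθ ≤ Real.sin (t * Δθ) :=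
    sin_mul_ge hΔθ0 hΔθπ.le ht0 ht1
  constructor
  · rw [le_div_iff₀ hsin]
    have h1 : coth r₁ * ((1 - t) * Real.sin Δθ) ≤ coth r₁ * Real.sin ((1 - t) * Δθ) :=
      mul_le_mul_of_nonneg_left hs1 hc1.le
    have h2 : coth r₂ * (t * Real.sin Δθ) ≤ coth r₂ * Real.sin (t * Δθ) :=
      mul_le_mul_of_nonneg_left hs2 hc2.le
    nlinarith
  · intro ht0' ht1'
    rw [lt_div_iff₀ hsin]
    have hs2' : t * Real.sin Δθ < Real.sin (t * Δθ) := sin_mul_gt hΔθ0 hΔθπ.le ht0' ht1'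
    have h1 : coth r₁ * ((1 - t) * Real.sin Δθ) ≤ coth r₁ * Real.sin ((1 - t) * Δθ) :=
      mul_le_mul_of_nonneg_left hs1 hc1.le
    have h2 : coth r₂ * (t * Real.sin Δθ) < coth r₂ * Real.sin (t * Δθ) :=
      mul_lt_mul_of_pos_left hs2' hc2
    nlinarith
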